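/- (Type A facet property, instance of Theorem 7.1) Let n ≥ 2. For every S ⊆ [n] and distinct a, b ∈ [n] ∖ S, there exists a submodular function f : 2^{[n]} → ℝ (i.e., f(S' ∪ {a'}) + f(S' ∪ {b'}) ≥ f(S') + f(S' ∪ {a',b'}) for all S' ⊆ [n] and distinct a', b' ∈ [n] ∖ S') such that f(S ∪ {a}) + f(S ∪ {b}) = f(S) + f(S ∪ {a,b}), while f(S' ∪ {a'}) + f(S' ∪ {b'}) > f(S') + f(S' ∪ {a',b'}) for every triple (S', {a',b'}) ≠ (S, {a,b}). In particular, each local submodular inequality defines a facet of the submodular cone in ℝ^{2^{[n]}}. -/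
import Mathlib

open Finset

/-- **Type A facet property (instance of Theorem 7.1)**: for every `S ⊆ [n]` and distinct
`a, b ∈ [n] ∖ S` there is a submodular function `f` satisfying the local submodular inequality
indexed by `(S, {a,b})` with equality, and every other local submodular inequality strictly.
Hence every local submodular inequality defines a facet of the submodular cone. -/
theorem local_submodular_inequality_is_facet
    (n : ℕ) (hn : 2 ≤ n) (S : Finset (Fin n)) (a b : Fin n)
    (ha : a ∉ S) (hb : b ∉ S) (hab : a ≠ b) :
    ∃ f : Finset (Fin n) → ℝ,
      (∀ S' : Finset (Fin n), ∀ a' b' : Fin n, a' ∉ S' → b' ∉ S' → a' ≠ b' →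
        f (insert a' S') + f (insert b' S') ≥ f S' + f (insert a' (insert b' S'))) ∧
      (f (insert a S) + f (insert b S) = f S + f (insert a (insert b S))) ∧
      (∀ S' : Finset (Fin n), ∀ a' b' : Fin n, a' ∉ S' → b' ∉ S' → a' ≠ b' →
        ¬(S' = S ∧ ({a', b'} : Finset (Fin n)) = ({a, b} : Finset (Fin n))) →
        f (insert a' S') + f (insert b' S') > f S' + f (insert a' (insert b' S'))) := by
  classical
  -- the function
  set f : Finset (Fin n) → ℝ := fun T =>
    -(T.card : ℝ) * ((T.card : ℝ) - 1) +
      (if a ∈ T ∧ b ∈ T then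
        4 - (S.card : ℝ) + 2 * ((S ∩ T).card : ℝ) - (T.card : ℝ) else 0) with hf
  have hfT : ∀ T : Finset (Fin n), f T =
      -(T.card : ℝ) * ((T.card : ℝ) - 1) +
      (if a ∈ T ∧ b ∈ T then
        4 - (S.card : ℝ) + 2 * ((S ∩ T).card : ℝ) - (T.card : ℝ) else 0) := fun T => rfl
  -- symmetry of the defect in the pair
  have hswap : ∀ (S' : Finset (Fin n)) (x y : Fin n),
      f (insert x S') + f (insert y S') - (f S' + f (insert x (insert y S')))
        = f (insert y S') + f (insert x S') - (f S' + f (insert y (insert x S'))) := by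
    intro S' x y
    rw [Finset.insert_comm]; ring
  -- the defect for the pair {a, b}
  have hcase1 : ∀ S' : Finset (Fin n), a ∉ S' → b ∉ S' →
      f (insert a S') + f (insert b S') - (f S' + f (insert a (insert b S')))
        = (S.card : ℝ) + (S'.card : ℝ) - 2 * ((S ∩ S').card : ℝ) := by
    intro S' h1 h2
    have m1 : ¬(a ∈ insert a S' ∧ b ∈ insert a S') := by
      simp [Finset.mem_insert, Ne.symm hab, h2]
    have m2 : ¬(a ∈ insert b S' ∧ b ∈ insert b S') := by
      simp [Finset.mem_insert, hab, h1]
    have m3 : ¬(a ∈ S' ∧ b ∈ S') := by simp [h1]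
    have m4 : a ∈ insert a (insert b S') ∧ b ∈ insert a (insert b S') := by simp
    have hanb : a ∉ insert b S' := by simp [Finset.mem_insert, hab, h1]
    have c1 : (insert a S').card = S'.card + 1 := Finset.card_insert_of_notMem h1
    have c2 : (insert b S').card = S'.card + 1 := Finset.card_insert_of_notMem h2
    have c3 : (insert a (insert b S')).card = S'.card + 2 := by
      rw [Finset.card_insert_of_notMem hanb, c2]
    have i4 : S ∩ insert a (insert b S') = S ∩ S' := by
      rw [Finset.inter_insert_of_notMem ha, Finset.inter_insert_of_notMem hb]
    simp only [hfT, if_neg m1, if_neg m2, if_neg m3, if_pos m4, c1, c2, c3, i4]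
    push_cast
    ring
  -- the defect for a pair {a, c} with c ∉ {a, b}
  have haux : ∀ (S' : Finset (Fin n)) (c : Fin n), c ∉ S' → a ∉ S' → c ≠ a → c ≠ b →
      f (insert a S') + f (insert c S') - (f S' + f (insert a (insert c S'))) ≥ 1 := by
    intro S' c hc haS' hca hcb
    have hanc : a ∉ insert c S' := by simp [Finset.mem_insert, Ne.symm hca, haS']
    have c1 : (insert a S').card = S'.card + 1 := Finset.card_insert_of_notMem haS'
    have c2 : (insert c S').card = S'.card + 1 := Finset.card_insert_of_notMem hc
    have c3 : (insert a (insert c S')).card = S'.card + 2 := by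
      rw [Finset.card_insert_of_notMem hanc, c2]
    have m2 : ¬(a ∈ insert c S' ∧ b ∈ insert c S') := by
      simp [Finset.mem_insert, Ne.symm hca, haS']
    have m3 : ¬(a ∈ S' ∧ b ∈ S') := by simp [haS']
    by_cases hbS' : b ∈ S'
    · have m1 : a ∈ insert a S' ∧ b ∈ insert a S' := by simp [hbS']
      have m4 : a ∈ insert a (insert c S') ∧ b ∈ insert a (insert c S') := by simp [hbS']
      have i1 : S ∩ insert a S' = S ∩ S' := Finset.inter_insert_of_notMem ha
      have i4 : S ∩ insert a (insert c S') = S ∩ insert c S' :=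
        Finset.inter_insert_of_notMem ha
      by_cases hcS : c ∈ S
      · have i5 : (S ∩ insert c S').card = (S ∩ S').card + 1 := by
          rw [Finset.inter_insert_of_mem hcS,
            Finset.card_insert_of_notMem (by simp [hc])]
        simp only [hfT, if_pos m1, if_neg m2, if_neg m3, if_pos m4, c1, c2, c3, i1, i4, i5]
        push_cast
        ring_nf
        norm_num
      · have i5 : S ∩ insert c S' = S ∩ S' := Finset.inter_insert_of_notMem hcS
        simp only [hfT, if_pos m1, if_neg m2, if_neg m3, if_pos m4, c1, c2, c3, i1, i4, i5]
        push_cast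
        ring_nf
        norm_num
    · have m1 : ¬(a ∈ insert a S' ∧ b ∈ insert a S') := by
        simp [Finset.mem_insert, Ne.symm hab, hbS']
      have m4 : ¬(a ∈ insert a (insert c S') ∧ b ∈ insert a (insert c S')) := by
        simp [Finset.mem_insert, Ne.symm hab, Ne.symm hcb, hbS']
      simp only [hfT, if_neg m1, if_neg m2, if_neg m3, if_neg m4, c1, c2, c3]
      push_cast
      ring_nf
      norm_num
  -- the defect for a pair {b, c} with c ∉ {a, b}
  have haux' : ∀ (S' : Finset (Fin n)) (c : Fin n), c ∉ S' → b ∉ S' → c ≠ a → c ≠ b →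
      f (insert b S') + f (insert c S') - (f S' + f (insert b (insert c S'))) ≥ 1 := by
    intro S' c hc hbS' hca hcb
    have hbnc : b ∉ insert c S' := by simp [Finset.mem_insert, Ne.symm hcb, hbS']
    have c1 : (insert b S').card = S'.card + 1 := Finset.card_insert_of_notMem hbS'
    have c2 : (insert c S').card = S'.card + 1 := Finset.card_insert_of_notMem hc
    have c3 : (insert b (insert c S')).card = S'.card + 2 := by
      rw [Finset.card_insert_of_notMem hbnc, c2]
    have m3 : ¬(a ∈ S' ∧ b ∈ S') := by simp [hbS']
    by_cases haS' : a ∈ S'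
    · have m1 : a ∈ insert b S' ∧ b ∈ insert b S' := by simp [haS']
      have m2 : ¬(a ∈ insert c S' ∧ b ∈ insert c S') := by
        simp [Finset.mem_insert, Ne.symm hcb, hbS']
      have m4 : a ∈ insert b (insert c S') ∧ b ∈ insert b (insert c S') := by simp [haS']
      have i1 : S ∩ insert b S' = S ∩ S' := Finset.inter_insert_of_notMem hb
      have i4 : S ∩ insert b (insert c S') = S ∩ insert c S' :=
        Finset.inter_insert_of_notMem hb
      by_cases hcS : c ∈ S
      · have i5 : (S ∩ insert c S').card = (S ∩ S').card + 1 := by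
          rw [Finset.inter_insert_of_mem hcS,
            Finset.card_insert_of_notMem (by simp [hc])]
        simp only [hfT, if_pos m1, if_neg m2, if_neg m3, if_pos m4, c1, c2, c3, i1, i4, i5]
        push_cast
        ring_nf
        norm_num
      · have i5 : S ∩ insert c S' = S ∩ S' := Finset.inter_insert_of_notMem hcS
        simp only [hfT, if_pos m1, if_neg m2, if_neg m3, if_pos m4, c1, c2, c3, i1, i4, i5]
        push_cast
        ring_nf
        norm_num
    · have m1 : ¬(a ∈ insert b S' ∧ b ∈ insert b S') := by
        simp [Finset.mem_insert, hab, haS']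
      have m2 : ¬(a ∈ insert c S' ∧ b ∈ insert c S') := by
        simp [Finset.mem_insert, Ne.symm hca, haS']
      have m4 : ¬(a ∈ insert b (insert c S') ∧ b ∈ insert b (insert c S')) := by
        simp [Finset.mem_insert, hab, Ne.symm hca, haS']
      simp only [hfT, if_neg m1, if_neg m2, if_neg m3, if_neg m4, c1, c2, c3]
      push_cast
      ring_nf
      norm_num
  -- the defect for a pair disjoint from {a, b}
  have hcase7 : ∀ (S' : Finset (Fin n)) (a' b' : Fin n), a' ∉ S' → b' ∉ S' → a' ≠ b' →
      a' ≠ a → a' ≠ b → b' ≠ a → b' ≠ b →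
      f (insert a' S') + f (insert b' S') - (f S' + f (insert a' (insert b' S'))) ≥ 1 := by
    intro S' a' b' ha' hb' hab' h1 h2 h3 h4
    have hanb : a' ∉ insert b' S' := by simp [Finset.mem_insert, hab', ha']
    have c1 : (insert a' S').card = S'.card + 1 := Finset.card_insert_of_notMem ha'
    have c2 : (insert b' S').card = S'.card + 1 := Finset.card_insert_of_notMem hb'
    have c3 : (insert a' (insert b' S')).card = S'.card + 2 := by
      rw [Finset.card_insert_of_notMem hanb, c2]
    by_cases hA : a ∈ S'
    · by_cases hB : b ∈ S'
      · have m1 : a ∈ insert a' S' ∧ b ∈ insert a' S' := by simp [hA, hB]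
        have m2 : a ∈ insert b' S' ∧ b ∈ insert b' S' := by simp [hA, hB]
        have m3 : a ∈ S' ∧ b ∈ S' := ⟨hA, hB⟩
        have m4 : a ∈ insert a' (insert b' S') ∧ b ∈ insert a' (insert b' S') := by
          simp [hA, hB]
        have hnb' : a' ∉ S ∩ insert b' S' := fun h => hanb (Finset.mem_of_mem_inter_right h)
        by_cases hAS : a' ∈ S <;> by_cases hBS : b' ∈ S
        · have i1 : (S ∩ insert a' S').card = (S ∩ S').card + 1 := by
            rw [Finset.inter_insert_of_mem hAS,
              Finset.card_insert_of_notMem (by simp [ha'])]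
          have i2 : (S ∩ insert b' S').card = (S ∩ S').card + 1 := by
            rw [Finset.inter_insert_of_mem hBS,
              Finset.card_insert_of_notMem (by simp [hb'])]
          have i4 : (S ∩ insert a' (insert b' S')).card = (S ∩ S').card + 2 := by
            rw [Finset.inter_insert_of_mem hAS, Finset.card_insert_of_notMem hnb',
              Finset.inter_insert_of_mem hBS,
              Finset.card_insert_of_notMem (by simp [hb'])]
          simp only [hfT, if_pos m1, if_pos m2, if_pos m3, if_pos m4, c1, c2, c3, i1, i2, i4]
          push_cast
          ring_nf
          norm_num
        · have i1 : (S ∩ insert a' S').card = (S ∩ S').card + 1 := by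
            rw [Finset.inter_insert_of_mem hAS,
              Finset.card_insert_of_notMem (by simp [ha'])]
          have i2 : S ∩ insert b' S' = S ∩ S' := Finset.inter_insert_of_notMem hBS
          have i4 : (S ∩ insert a' (insert b' S')).card = (S ∩ S').card + 1 := by
            rw [Finset.inter_insert_of_mem hAS, Finset.card_insert_of_notMem hnb', i2]
          simp only [hfT, if_pos m1, if_pos m2, if_pos m3, if_pos m4, c1, c2, c3, i1, i2, i4]
          push_cast
          ring_nf
          norm_num
        · have i1 : S ∩ insert a' S' = S ∩ S' := Finset.inter_insert_of_notMem hAS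
          have i2 : (S ∩ insert b' S').card = (S ∩ S').card + 1 := by
            rw [Finset.inter_insert_of_mem hBS,
              Finset.card_insert_of_notMem (by simp [hb'])]
          have i4 : (S ∩ insert a' (insert b' S')).card = (S ∩ S').card + 1 := by
            rw [Finset.inter_insert_of_notMem hAS, i2]
          simp only [hfT, if_pos m1, if_pos m2, if_pos m3, if_pos m4, c1, c2, c3, i1, i2, i4]
          push_cast
          ring_nf
          norm_num
        · have i1 : S ∩ insert a' S' = S ∩ S' := Finset.inter_insert_of_notMem hAS
          have i2 : S ∩ insert b' S' = S ∩ S' := Finset.inter_insert_of_notMem hBS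
          have i4 : S ∩ insert a' (insert b' S') = S ∩ S' := by
            rw [Finset.inter_insert_of_notMem hAS, i2]
          simp only [hfT, if_pos m1, if_pos m2, if_pos m3, if_pos m4, c1, c2, c3, i1, i2, i4]
          push_cast
          ring_nf
          norm_num
      · have m1 : ¬(a ∈ insert a' S' ∧ b ∈ insert a' S') := by
          simp [Finset.mem_insert, Ne.symm h2, hB]
        have m2 : ¬(a ∈ insert b' S' ∧ b ∈ insert b' S') := by
          simp [Finset.mem_insert, Ne.symm h4, hB]
        have m3 : ¬(a ∈ S' ∧ b ∈ S') := by simp [hB]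
        have m4 : ¬(a ∈ insert a' (insert b' S') ∧ b ∈ insert a' (insert b' S')) := by
          simp [Finset.mem_insert, Ne.symm h2, Ne.symm h4, hB]
        simp only [hfT, if_neg m1, if_neg m2, if_neg m3, if_neg m4, c1, c2, c3]
        push_cast
        ring_nf
        norm_num
    · have m1 : ¬(a ∈ insert a' S' ∧ b ∈ insert a' S') := by
        simp [Finset.mem_insert, Ne.symm h1, hA]
      have m2 : ¬(a ∈ insert b' S' ∧ b ∈ insert b' S') := by
        simp [Finset.mem_insert, Ne.symm h3, hA]
      have m3 : ¬(a ∈ S' ∧ b ∈ S') := by simp [hA]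
      have m4 : ¬(a ∈ insert a' (insert b' S') ∧ b ∈ insert a' (insert b' S')) := by
        simp [Finset.mem_insert, Ne.symm h1, Ne.symm h3, hA]
      simp only [hfT, if_neg m1, if_neg m2, if_neg m3, if_neg m4, c1, c2, c3]
      push_cast
      ring_nf
      norm_num
  -- the master case analysis
  have key : ∀ (S' : Finset (Fin n)) (a' b' : Fin n), a' ∉ S' → b' ∉ S' → a' ≠ b' →
      (((a' = a ∧ b' = b) ∨ (a' = b ∧ b' = a)) ∧
        f (insert a' S') + f (insert b' S') - (f S' + f (insert a' (insert b' S')))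
          = (S.card : ℝ) + (S'.card : ℝ) - 2 * ((S ∩ S').card : ℝ)) ∨
      ((¬((a' = a ∧ b' = b) ∨ (a' = b ∧ b' = a))) ∧
        f (insert a' S') + f (insert b' S') - (f S' + f (insert a' (insert b' S'))) ≥ 1) := by
    intro S' a' b' ha' hb' hab'
    by_cases h1 : a' = a
    · subst h1
      by_cases h2 : b' = b
      · subst h2
        exact Or.inl ⟨Or.inl ⟨rfl, rfl⟩, hcase1 S' ha' hb'⟩
      · refine Or.inr ⟨?_, haux S' b' hb' ha' (Ne.symm hab') h2⟩
        rintro (⟨-, h⟩ | ⟨h, -⟩)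
        · exact h2 h
        · exact hab h
    · by_cases h2 : a' = b
      · subst h2
        by_cases h3 : b' = a
        · subst h3
          refine Or.inl ⟨Or.inr ⟨rfl, rfl⟩, ?_⟩
          rw [hswap]
          exact hcase1 S' hb' ha'
        · refine Or.inr ⟨?_, haux' S' b' hb' ha' h3 (Ne.symm hab')⟩
          rintro (⟨h, -⟩ | ⟨-, h⟩)
          · exact hab h.symm
          · exact h3 h
      · by_cases h3 : b' = a
        · refine Or.inr ⟨?_, ?_⟩
          · rintro (⟨h, -⟩ | ⟨h, -⟩)
            · exact h1 h
            · exact h2 h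
          · rw [h3, hswap]
            exact haux S' a' ha' (h3 ▸ hb') h1 h2
        · by_cases h4 : b' = b
          · refine Or.inr ⟨?_, ?_⟩
            · rintro (⟨h, -⟩ | ⟨h, -⟩)
              · exact h1 h
              · exact h2 h
            · rw [h4, hswap]
              exact haux' S' a' ha' (h4 ▸ hb') h1 h2
          · refine Or.inr ⟨?_, hcase7 S' a' b' ha' hb' hab' h1 h2 h3 h4⟩
            rintro (⟨h, -⟩ | ⟨-, h⟩)
            · exact h1 h
            · exact h3 h
  refine ⟨f, ?_, ?_, ?_⟩
  · -- submodularity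
    intro S' a' b' ha' hb' hab'
    rcases key S' a' b' ha' hb' hab' with ⟨-, hD⟩ | ⟨-, hD⟩
    · have h1 : (S ∩ S').card ≤ S.card := Finset.card_le_card (Finset.inter_subset_left)
      have h2 : (S ∩ S').card ≤ S'.card := Finset.card_le_card (Finset.inter_subset_right)
      have h1' : ((S ∩ S').card : ℝ) ≤ (S.card : ℝ) := by exact_mod_cast h1
      have h2' : ((S ∩ S').card : ℝ) ≤ (S'.card : ℝ) := by exact_mod_cast h2
      linarith
    · linarith
  · -- equality at the target
    rcases key S a b ha hb hab with ⟨-, hD⟩ | ⟨h, -⟩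
    · rw [Finset.inter_self] at hD
      linarith
    · exact absurd (Or.inl ⟨rfl, rfl⟩) h
  · -- strictness elsewhere
    intro S' a' b' ha' hb' hab' hne
    rcases key S' a' b' ha' hb' hab' with ⟨hp, hD⟩ | ⟨-, hD⟩
    · -- the pair is {a, b}, so S' ≠ S
      have hpair : ({a', b'} : Finset (Fin n)) = ({a, b} : Finset (Fin n)) := by
        rcases hp with ⟨h5, h6⟩ | ⟨h5, h6⟩ <;> rw [h5, h6]
        exact Finset.pair_comm b a
      have hS : S' ≠ S := fun h => hne ⟨h, hpair⟩
      have h1 : (S ∩ S').card ≤ S.card := Finset.card_le_card (Finset.inter_subset_left)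
      have h2 : (S ∩ S').card ≤ S'.card := Finset.card_le_card (Finset.inter_subset_right)
      have hlt : 2 * (S ∩ S').card < S.card + S'.card := by
        rcases lt_or_eq_of_le h1 with h | h
        · omega
        · rcases lt_or_eq_of_le h2 with h' | h'
          · omega
          · exfalso
            have e1 : S ∩ S' = S := Finset.eq_of_subset_of_card_le Finset.inter_subset_left h.ge
            have e2 : S ∩ S' = S' :=
              Finset.eq_of_subset_of_card_le Finset.inter_subset_right h'.ge
            exact hS (e2.symm.trans e1)
      have hlt' : 2 * ((S ∩ S').card : ℝ) < (S.card : ℝ) + (S'.card : ℝ) := by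
        exact_mod_cast hlt
      linarith
    · linarith
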